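/- arXiv:math/0608177 — 2 statements merged into one kernel-verified Lean document; each statement's English description precedes it below -/
import Mathlib

section
/- (Sharpness of Theorem 1) For every n ≥ 2, every d with 1 ≤ d ≤ n, and every pair z, w ∈ 𝔻, there exists a holomorphic map 𝔉 : 𝔻 → Ω_n such that, writing d(z), d(w) for the degrees of the minimal polynomials of 𝔉(z), 𝔉(w), one has max{ max_{μ ∈ σ(𝔉(w))} dist_ℳ(μ; σ(𝔉(z)))^{d(z)}, max_{λ ∈ σ(𝔉(z))} dist_ℳ(λ; σ(𝔉(w)))^{d(w)} } = |(z − w)/(1 − conj(z)w)|. Explicitly, one may take 𝔉(ζ) = diag(N_d(M(ζ)), M(ζ)·I_{n−d}) where M(ζ) = (ζ − z)/(1 − conj(z)ζ) and N_d(η) is the d×d matrix with 1's on the subdiagonal and η in the (1,d) corner. -/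
open Metric

/-- The spectral radius of a complex `n × n` matrix. -/
noncomputable def sRad {n : ℕ} (A : Matrix (Fin n) (Fin n) ℂ) : ℝ :=
  sSup ((fun μ => ‖μ‖) '' spectrum ℂ A)

/-- The pseudo-hyperbolic distance from `μ` to a set `K ⊆ 𝔻`. -/
noncomputable def distM (μ : ℂ) (K : Set ℂ) : ℝ :=
  sInf ((fun z => ‖(μ - z) / (1 - (starRingEnd ℂ z) * μ)‖) '' K)

/-- The `n × n` block-diagonal matrix `diag(N_d(η), η·I_{n-d})`, where `N_d(η)` is the
`d × d` matrix with `1`'s on the subdiagonal and `η` in the `(1,d)` corner. -/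
def Fmat (n d : ℕ) (η : ℂ) : Matrix (Fin n) (Fin n) ℂ :=
  Matrix.of fun i j =>
    if (i : ℕ) < d ∧ (j : ℕ) < d then
      (if (i : ℕ) = (j : ℕ) + 1 then 1 else if (i : ℕ) = 0 ∧ (j : ℕ) = d - 1 then η else 0)
    else if i = j then η else 0

open Polynomial Matrix
/-- plain "basis vector" indexed by a natural number -/
def ev (n k : ℕ) : Fin n → ℂ := fun i => if (i : ℕ) = k then 1 else 0

lemma ev_ne_zero {n k : ℕ} (h : k < n) : ev n k ≠ 0 := by
  intro h0
  have := congrFun h0 ⟨k, h⟩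
  simp [ev] at this

lemma mulVec_ev {n : ℕ} (M : Matrix (Fin n) (Fin n) ℂ) {k : ℕ} (hk : k < n) :
    M *ᵥ ev n k = fun i => M i ⟨k, hk⟩ := by
  funext i
  simp only [Matrix.mulVec, dotProduct, ev]
  rw [Finset.sum_eq_single (⟨k, hk⟩ : Fin n)]
  · simp
  · intro b _ hb
    rw [if_neg, mul_zero]
    simpa [Fin.ext_iff] using hb
  · simp

lemma sum_mulVec {n : ℕ} {ι : Type*} (s : Finset ι) (f : ι → Matrix (Fin n) (Fin n) ℂ)
    (v : Fin n → ℂ) : (∑ i ∈ s, f i) *ᵥ v = ∑ i ∈ s, f i *ᵥ v := by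
  funext j
  simp only [Matrix.mulVec, dotProduct, Finset.sum_apply, Matrix.sum_apply,
    Finset.sum_mul]
  exact Finset.sum_comm

lemma matrix_eq_zero_of_cols {n : ℕ} (M : Matrix (Fin n) (Fin n) ℂ)
    (h : ∀ k : ℕ, k < n → M *ᵥ ev n k = 0) : M = 0 := by
  ext i j
  have := congrFun (h j j.isLt) i
  rw [mulVec_ev M j.isLt] at this
  simpa using this

section cols

variable {n d : ℕ} (η : ℂ)

lemma Fmat_col1 (hdn : d ≤ n) {j : ℕ} (hj : j + 1 < d) :
    Fmat n d η *ᵥ ev n j = ev n (j + 1) := by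
  rw [mulVec_ev _ (by omega : j < n)]
  funext i
  simp only [Fmat, Matrix.of_apply, ev, Fin.ext_iff]
  split_ifs <;> simp_all <;> omega

lemma Fmat_col2 (hd1 : 1 ≤ d) (hdn : d ≤ n) :
    Fmat n d η *ᵥ ev n (d - 1) = η • ev n 0 := by
  rw [mulVec_ev _ (by omega : d - 1 < n)]
  funext i
  simp only [Fmat, Matrix.of_apply, ev, Fin.ext_iff, Pi.smul_apply, smul_eq_mul]
  split_ifs <;> simp_all <;> omega

lemma Fmat_col3 (hdn : d ≤ n) {j : ℕ} (hj1 : d ≤ j) (hj2 : j < n) :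
    Fmat n d η *ᵥ ev n j = η • ev n j := by
  rw [mulVec_ev _ hj2]
  funext i
  simp only [Fmat, Matrix.of_apply, ev, Fin.ext_iff, Pi.smul_apply, smul_eq_mul]
  split_ifs <;> simp_all <;> omega

lemma Fmat_pow (hd1 : 1 ≤ d) (hdn : d ≤ n) :
    ∀ k j, j + k ≤ d - 1 → (Fmat n d η) ^ k *ᵥ ev n j = ev n (j + k) := by
  intro k
  induction k with
  | zero => intro j _; simp [Matrix.one_mulVec]
  | succ k ih =>
    intro j hj
    rw [pow_succ, ← Matrix.mulVec_mulVec, Fmat_col1 η hdn (by omega)]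
    rw [show j + (k + 1) = (j + 1) + k from by omega]
    exact ih (j + 1) (by omega)

lemma Fmat_pow_d (hd1 : 1 ≤ d) (hdn : d ≤ n) {j : ℕ} (hj : j < d) :
    (Fmat n d η) ^ d *ᵥ ev n j = η • ev n j := by
  have hsplit : (Fmat n d η) ^ d = (Fmat n d η) ^ j * ((Fmat n d η) ^ 1 *
      (Fmat n d η) ^ (d - 1 - j)) := by
    rw [← pow_add, ← pow_add]
    congr 1
    omega
  rw [hsplit, ← Matrix.mulVec_mulVec, ← Matrix.mulVec_mulVec,
    Fmat_pow η hd1 hdn (d - 1 - j) j (by omega)]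
  rw [show j + (d - 1 - j) = d - 1 by omega, pow_one, Fmat_col2 η hd1 hdn,
    Matrix.mulVec_smul, Fmat_pow η hd1 hdn j 0 (by omega), Nat.zero_add]

lemma Fmat_aeval (hd1 : 1 ≤ d) (hdn : d ≤ n) :
    aeval (Fmat n d η) ((X ^ d - C η) * (X - C η)) = 0 := by
  have hB : ∀ m : ℕ, m < d → ((Fmat n d η) ^ d - η • 1) *ᵥ ev n m = 0 := by
    intro m hm
    rw [Matrix.sub_mulVec, Fmat_pow_d η hd1 hdn hm, Matrix.smul_mulVec,
      Matrix.one_mulVec, sub_self]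
  have h : ((Fmat n d η) ^ d - η • 1) * (Fmat n d η - η • 1) = 0 := by
    apply matrix_eq_zero_of_cols
    intro k hk
    rw [← Matrix.mulVec_mulVec]
    have hinner : (Fmat n d η - η • 1) *ᵥ ev n k =
        Fmat n d η *ᵥ ev n k - η • ev n k := by
      rw [Matrix.sub_mulVec, Matrix.smul_mulVec, Matrix.one_mulVec]
    by_cases hkd : k < d
    · rcases Nat.lt_or_ge (k + 1) d with hk1 | hk1
      · rw [hinner, Fmat_col1 η hdn hk1, Matrix.mulVec_sub, Matrix.mulVec_smul,
          hB (k + 1) hk1, hB k hkd, smul_zero, sub_self]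
      · have hk2 : k = d - 1 := by omega
        subst hk2
        rw [hinner, Fmat_col2 η hd1 hdn, Matrix.mulVec_sub, Matrix.mulVec_smul,
          Matrix.mulVec_smul, hB 0 (by omega), hB (d - 1) (by omega)]
        simp
    · rw [hinner, Fmat_col3 η hdn (by omega) hk, sub_self, Matrix.mulVec_zero]
  simpa [Algebra.algebraMap_eq_smul_one] using h

end cols

section spec

variable {n d : ℕ}

lemma spectrum_subset_of_aeval {A : Matrix (Fin n) (Fin n) ℂ} {p : ℂ[X]}
    (hp : aeval A p = 0) : spectrum ℂ A ⊆ {μ : ℂ | p.eval μ = 0} := by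
  intro μ hμ
  by_contra hne
  obtain ⟨q, hq⟩ := Polynomial.X_sub_C_dvd_sub_C_eval (a := μ) (p := p)
  have h2 := congrArg (aeval A) hq
  rw [map_sub, _root_.map_mul, map_sub, aeval_X, aeval_C, hp, aeval_C, zero_sub] at h2
  set c : ℂ := p.eval μ with hc
  have h4 : (algebraMap ℂ (Matrix (Fin n) (Fin n) ℂ) μ - A) * aeval A q
      = algebraMap ℂ _ c := by
    rw [← neg_sub A, neg_mul, ← h2, neg_neg]
  have h5 : (algebraMap ℂ (Matrix (Fin n) (Fin n) ℂ) μ - A) * (c⁻¹ • aeval A q) = 1 := by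
    rw [mul_smul_comm, h4, Algebra.algebraMap_eq_smul_one, smul_smul,
      inv_mul_cancel₀ hne, one_smul]
  have h6 := congrArg Matrix.det h5
  rw [Matrix.det_mul, Matrix.det_one] at h6
  exact spectrum.mem_iff.mp hμ ((Matrix.isUnit_iff_isUnit_det _).mpr
    (IsUnit.of_mul_eq_one _ h6))

lemma Fmat_root_mem (hd1 : 1 ≤ d) (hdn : d ≤ n) {η μ : ℂ} (hμ : μ ^ d = η) :
    μ ∈ spectrum ℂ (Fmat n d η) := by
  classical
  set v : Fin n → ℂ := fun j => if (j : ℕ) < d then μ ^ (d - 1 - (j : ℕ)) else 0 with hv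
  have hv1 : v ⟨d - 1, by omega⟩ = 1 := by
    simp only [hv]
    rw [if_pos (by simp; omega)]
    norm_num
  have hv0 : v ≠ 0 := fun h => by simp [h] at hv1
  have hAv : Fmat n d η *ᵥ v = μ • v := by
    funext i
    show ∑ j : Fin n, Fmat n d η i j * v j = μ * v i
    by_cases hi : (i : ℕ) < d
    · by_cases hi0 : (i : ℕ) = 0
      · rw [Finset.sum_eq_single_of_mem (⟨d - 1, by omega⟩ : Fin n) (Finset.mem_univ _)]
        · have h1 : Fmat n d η i ⟨d - 1, by omega⟩ = η := by
            simp only [Fmat, Matrix.of_apply, Fin.ext_iff, Fin.val_mk, and_true, true_and]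
            split_ifs <;> first | rfl | omega | (exfalso; omega)
          rw [h1, hv1, mul_one, hv]
          simp only [hi0, Nat.sub_zero]
          rw [if_pos (show (0:ℕ) < d by omega)]
          have hstep : μ * μ ^ (d - 1) = μ ^ d := by
            rw [← pow_succ']
            congr 1
            omega
          rw [hstep]
          exact hμ.symm
        · intro b _ hb
          have hb' : (b : ℕ) ≠ d - 1 := fun h => hb (Fin.ext (by rw [h]))
          have h0 : Fmat n d η i b = 0 := by
            simp only [Fmat, Matrix.of_apply, Fin.ext_iff, Fin.val_mk, and_true, true_and]
            split_ifs <;> first | rfl | omega | (exfalso; omega)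
          rw [h0, zero_mul]
      · rw [Finset.sum_eq_single_of_mem (⟨(i : ℕ) - 1, by omega⟩ : Fin n) (Finset.mem_univ _)]
        · have h1 : Fmat n d η i ⟨(i : ℕ) - 1, by omega⟩ = 1 := by
            have hi1 : 1 ≤ (i : ℕ) := by omega
            simp only [Fmat, Matrix.of_apply, Fin.ext_iff, Fin.val_mk, and_true, true_and]
            split_ifs <;> first | rfl | omega | (exfalso; omega)
          rw [h1, one_mul, hv]
          simp only [if_pos hi]
          rw [if_pos (show (i : ℕ) - 1 < d by omega)]
          show μ ^ (d - 1 - ((i : ℕ) - 1)) = μ * μ ^ (d - 1 - (i : ℕ))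
          rw [show d - 1 - ((i : ℕ) - 1) = (d - 1 - (i : ℕ)) + 1 from by omega, pow_succ]
          ring
        · intro b _ hb
          have hb' : (b : ℕ) ≠ (i : ℕ) - 1 := fun h => hb (Fin.ext (by rw [h]))
          have hi1 : 1 ≤ (i : ℕ) := by omega
          have h0 : Fmat n d η i b = 0 := by
            simp only [Fmat, Matrix.of_apply, Fin.ext_iff, Fin.val_mk, and_true, true_and]
            split_ifs <;> first | rfl | omega | (exfalso; omega)
          rw [h0, zero_mul]
    · rw [Finset.sum_eq_single_of_mem i (Finset.mem_univ _)]
      · have hvi : v i = 0 := by rw [hv]; exact if_neg hi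
        rw [hvi, mul_zero, mul_zero]
      · intro b _ hb
        have hb' : (b : ℕ) ≠ (i : ℕ) := fun h => hb (Fin.ext h)
        have h0 : Fmat n d η i b = 0 := by
          simp only [Fmat, Matrix.of_apply, Fin.ext_iff, Fin.val_mk, and_true, true_and]
          split_ifs <;> first | rfl | omega | (exfalso; omega)
        rw [h0, zero_mul]
  have hker : (algebraMap ℂ (Matrix (Fin n) (Fin n) ℂ) μ - Fmat n d η) *ᵥ v = 0 := by
    rw [Matrix.sub_mulVec, hAv, Algebra.algebraMap_eq_smul_one, Matrix.smul_mulVec,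
      Matrix.one_mulVec, sub_self]
  have hdet : (algebraMap ℂ (Matrix (Fin n) (Fin n) ℂ) μ - Fmat n d η).det = 0 :=
    Matrix.exists_mulVec_eq_zero_iff.mp ⟨v, hv0, hker⟩
  rw [spectrum.mem_iff]
  intro hU
  rw [Matrix.isUnit_iff_isUnit_det, hdet] at hU
  exact hU.ne_zero rfl

lemma Fmat_minpoly_ge (hd1 : 1 ≤ d) (hdn : d ≤ n) (η : ℂ) :
    d ≤ (minpoly ℂ (Fmat n d η)).natDegree := by
  by_contra hcon
  push_neg at hcon
  set p := minpoly ℂ (Fmat n d η) with hp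
  set D := p.natDegree with hD
  have hp0 : p ≠ 0 := minpoly.ne_zero (Matrix.isIntegral _)
  have h0 : aeval (Fmat n d η) p = 0 := minpoly.aeval ℂ _
  rw [Polynomial.aeval_eq_sum_range] at h0
  have h1 := congrArg (fun M => M *ᵥ ev n 0) h0
  simp only [sum_mulVec, Matrix.zero_mulVec] at h1
  have h2 : ∀ i ∈ Finset.range (D + 1),
      (p.coeff i • (Fmat n d η) ^ i) *ᵥ ev n 0 = p.coeff i • ev n i := by
    intro i hi
    simp only [Finset.mem_range] at hi
    rw [Matrix.smul_mulVec, Fmat_pow η hd1 hdn i 0 (by omega), Nat.zero_add]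
  rw [Finset.sum_congr rfl h2] at h1
  have h3 : (∑ i ∈ Finset.range (D + 1), p.coeff i • ev n i) ⟨D, by omega⟩ = p.coeff D := by
    rw [Finset.sum_apply]
    rw [Finset.sum_eq_single_of_mem D (by simp)]
    · simp [ev]
    · intro b _ hb
      simp [ev, show D ≠ b from fun h => hb h.symm]
  have h4 : p.coeff D = 0 := by rw [← h3, h1]; simp
  exact hp0 (Polynomial.leadingCoeff_eq_zero.mp h4)

end spec

section more

variable {n d : ℕ}

lemma Fmat_pow_d_zero (hd1 : 1 ≤ d) (hdn : d ≤ n) : (Fmat n d (0:ℂ)) ^ d = 0 := by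
  apply matrix_eq_zero_of_cols
  intro k hk
  by_cases hkd : k < d
  · rw [Fmat_pow_d 0 hd1 hdn hkd, zero_smul]
  · have hsp : (Fmat n d (0:ℂ)) ^ d = (Fmat n d 0) ^ (d - 1) * (Fmat n d 0) ^ 1 := by
      rw [← pow_add]
      congr 1
      omega
    rw [hsp, pow_one, ← Matrix.mulVec_mulVec, Fmat_col3 0 hdn (by omega) hk, zero_smul,
      Matrix.mulVec_zero]

lemma Fmat_minpoly_zero (hd1 : 1 ≤ d) (hdn : d ≤ n) :
    (minpoly ℂ (Fmat n d (0:ℂ))).natDegree = d := by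
  refine le_antisymm ?_ (Fmat_minpoly_ge hd1 hdn 0)
  have h : aeval (Fmat n d (0:ℂ)) ((X : ℂ[X]) ^ d) = 0 := by
    rw [map_pow, aeval_X, Fmat_pow_d_zero hd1 hdn]
  have hdvd := minpoly.dvd ℂ _ h
  have := Polynomial.natDegree_le_of_dvd hdvd (pow_ne_zero d Polynomial.X_ne_zero)
  simpa using this

lemma Fmat_spec_sub (hd1 : 1 ≤ d) (hdn : d ≤ n) (η : ℂ) :
    ∀ μ ∈ spectrum ℂ (Fmat n d η), μ ^ d = η ∨ μ = η := by
  intro μ hμ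
  have h := spectrum_subset_of_aeval (Fmat_aeval η hd1 hdn) hμ
  simp only [Set.mem_setOf_eq, eval_mul, eval_sub, eval_pow, eval_X, eval_C] at h
  rcases mul_eq_zero.mp h with h | h
  exacts [Or.inl (sub_eq_zero.mp h), Or.inr (sub_eq_zero.mp h)]

lemma Fmat_spectrum_zero (hd1 : 1 ≤ d) (hdn : d ≤ n) :
    spectrum ℂ (Fmat n d (0:ℂ)) = {0} := by
  apply Set.eq_singleton_iff_unique_mem.mpr
  constructor
  · exact Fmat_root_mem hd1 hdn (zero_pow (by omega))
  · intro μ hμ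
    rcases Fmat_spec_sub hd1 hdn 0 μ hμ with h | h
    · exact pow_eq_zero_iff (by omega) |>.mp h
    · exact h

lemma mob_den_ne {z : ℂ} (ζ : ℂ) (hz : ‖z‖ < 1) (hζ : ‖ζ‖ < 1) :
    1 - (starRingEnd ℂ z) * ζ ≠ 0 := by
  intro h
  have h1 : ‖(starRingEnd ℂ z) * ζ‖ < 1 := by
    rw [norm_mul, RCLike.norm_conj]
    nlinarith [norm_nonneg z, norm_nonneg ζ]
  rw [sub_eq_zero] at h
  rw [← h] at h1
  simp at h1

lemma mob_lt_one {z : ℂ} (ζ : ℂ) (hz : ‖z‖ < 1) (hζ : ‖ζ‖ < 1) :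
    ‖(ζ - z) / (1 - (starRingEnd ℂ z) * ζ)‖ < 1 := by
  have hden := mob_den_ne ζ hz hζ
  rw [norm_div, div_lt_one (norm_pos_iff.mpr hden)]
  have key : Complex.normSq (1 - (starRingEnd ℂ z) * ζ) - Complex.normSq (ζ - z)
      = (1 - Complex.normSq z) * (1 - Complex.normSq ζ) := by
    simp only [Complex.normSq_apply, Complex.sub_re, Complex.sub_im, Complex.mul_re,
      Complex.mul_im, Complex.one_re, Complex.one_im, Complex.conj_re, Complex.conj_im]
    ring
  have hz2 : Complex.normSq z < 1 := by
    rw [← Complex.sq_norm]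
    nlinarith [norm_nonneg z]
  have hζ2 : Complex.normSq ζ < 1 := by
    rw [← Complex.sq_norm]
    nlinarith [norm_nonneg ζ]
  apply lt_of_pow_lt_pow_left₀ 2 (norm_nonneg _)
  rw [Complex.sq_norm, Complex.sq_norm]
  nlinarith [key, hz2, hζ2]

lemma mob_diff {z : ℂ} (hz : ‖z‖ < 1) :
    DifferentiableOn ℂ (fun ζ => (ζ - z) / (1 - (starRingEnd ℂ z) * ζ)) (ball 0 1) := by
  apply DifferentiableOn.div
  · exact (differentiable_id.sub_const z).differentiableOn
  · exact ((differentiable_const (1:ℂ)).sub (differentiable_id.const_mul _)).differentiableOn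
  · intro ζ hζ
    exact mob_den_ne ζ hz (mem_ball_zero_iff.mp hζ)

end more

/-- (Sharpness of Theorem 1) For every `n ≥ 2`, `1 ≤ d ≤ n` and `z, w ∈ 𝔻` there is a
holomorphic `𝔉 : 𝔻 → Ω_n` attaining equality in the two-sided Schwarz inequality;
explicitly `𝔉(ζ) = diag(N_d(M(ζ)), M(ζ)·I_{n-d})` with `M(ζ) = (ζ - z)/(1 - conj(z)ζ)`
works. -/
theorem stmt13 (n d : ℕ) (hn : 2 ≤ n) (hd1 : 1 ≤ d) (hdn : d ≤ n)
    (z w : ℂ) (hz : z ∈ ball (0 : ℂ) 1) (hw : w ∈ ball (0 : ℂ) 1) :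
    ∃ F : ℂ → Matrix (Fin n) (Fin n) ℂ,
      F = (fun ζ => Fmat n d ((ζ - z) / (1 - (starRingEnd ℂ z) * ζ))) ∧
      (∀ i j : Fin n, DifferentiableOn ℂ (fun ζ => F ζ i j) (ball (0 : ℂ) 1)) ∧
      (∀ ζ ∈ ball (0 : ℂ) 1, sRad (F ζ) < 1) ∧
      max
        (sSup ((fun μ =>
          distM μ (spectrum ℂ (F z)) ^ (minpoly ℂ (F z)).natDegree) '' spectrum ℂ (F w)))
        (sSup ((fun lam =>
          distM lam (spectrum ℂ (F w)) ^ (minpoly ℂ (F w)).natDegree) '' spectrum ℂ (F z)))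
        = ‖(z - w) / (1 - (starRingEnd ℂ z) * w)‖ := by
  classical
  have hz' : ‖z‖ < 1 := mem_ball_zero_iff.mp hz
  have hw' : ‖w‖ < 1 := mem_ball_zero_iff.mp hw
  refine ⟨fun ζ => Fmat n d ((ζ - z) / (1 - (starRingEnd ℂ z) * ζ)), rfl, ?_, ?_, ?_⟩
  · -- differentiability of entries
    intro i j
    have hM := mob_diff hz'
    simp only [Fmat, Matrix.of_apply]
    by_cases h1 : (i : ℕ) < d ∧ (j : ℕ) < d
    · simp only [if_pos h1]
      by_cases h2 : (i : ℕ) = (j : ℕ) + 1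
      · simp only [if_pos h2]; exact differentiableOn_const _
      · simp only [if_neg h2]
        by_cases h3 : (i : ℕ) = 0 ∧ (j : ℕ) = d - 1
        · simp only [if_pos h3]; exact hM
        · simp only [if_neg h3]; exact differentiableOn_const _
    · simp only [if_neg h1]
      by_cases h2 : i = j
      · simp only [if_pos h2]; exact hM
      · simp only [if_neg h2]; exact differentiableOn_const _
  · -- spectral radius < 1
    intro ζ hζ
    set μη : ℂ := (ζ - z) / (1 - (starRingEnd ℂ z) * ζ) with hμη
    have hη1 : ‖μη‖ < 1 := mob_lt_one ζ hz' (mem_ball_zero_iff.mp hζ)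
    show sSup ((fun μ => ‖μ‖) '' spectrum ℂ (Fmat n d μη)) < 1
    set c : ℝ := ‖μη‖ ^ ((d : ℝ)⁻¹) with hc
    have hd0 : (0:ℝ) < (d : ℝ)⁻¹ := by
      rw [inv_pos]
      exact_mod_cast hd1
    have hc1 : c < 1 := Real.rpow_lt_one (norm_nonneg _) hη1 hd0
    have hbound : ∀ x ∈ (fun μ => ‖μ‖) '' spectrum ℂ (Fmat n d μη), x ≤ c := by
      rintro x ⟨μ, hμ, rfl⟩
      rcases Fmat_spec_sub hd1 hdn μη μ hμ with h | h
      · have hnorm : ‖μ‖ ^ d = ‖μη‖ := by rw [← norm_pow, h]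
        have : ‖μ‖ = c := by
          rw [hc, ← hnorm, ← Real.rpow_natCast ‖μ‖ d, ← Real.rpow_mul (norm_nonneg _),
            mul_inv_cancel₀ (by exact_mod_cast (by omega : d ≠ 0)), Real.rpow_one]
        exact this.le
      · rw [h]
        calc ‖μη‖ = ‖μη‖ ^ (1:ℝ) := (Real.rpow_one _).symm
          _ ≤ c := Real.rpow_le_rpow_of_exponent_ge' (norm_nonneg _) hη1.le hd0.le
            (by rw [inv_le_one_iff₀]; right; exact_mod_cast hd1)
    obtain ⟨μ₀, hμ₀⟩ := IsAlgClosed.exists_pow_nat_eq μη (show 0 < d by omega)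
    have hne : ((fun μ => ‖μ‖) '' spectrum ℂ (Fmat n d μη)).Nonempty :=
      ⟨‖μ₀‖, ⟨μ₀, Fmat_root_mem hd1 hdn hμ₀, rfl⟩⟩
    exact lt_of_le_of_lt (csSup_le hne hbound) hc1
  · -- the main equality
    set η : ℂ := (w - z) / (1 - (starRingEnd ℂ z) * w) with hη
    have hηlt : ‖η‖ < 1 := mob_lt_one w hz' hw'
    have hFzz : (fun ζ => Fmat n d ((ζ - z) / (1 - (starRingEnd ℂ z) * ζ))) z
        = Fmat n d 0 := by simp only [sub_self, zero_div]
    have hFww : (fun ζ => Fmat n d ((ζ - z) / (1 - (starRingEnd ℂ z) * ζ))) w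
        = Fmat n d η := rfl
    rw [hFzz, hFww, Fmat_spectrum_zero hd1 hdn, Fmat_minpoly_zero hd1 hdn]
    -- rewrite distM to {0}
    have hdist0 : ∀ μ : ℂ, distM μ ({0} : Set ℂ) = ‖μ‖ := by
      intro μ
      unfold distM
      rw [Set.image_singleton, map_zero, zero_mul, sub_zero, sub_zero, div_one,
        csInf_singleton]
    have himg1 : (fun μ => distM μ ({0} : Set ℂ) ^ d) '' spectrum ℂ (Fmat n d η)
        = (fun μ => ‖μ‖ ^ d) '' spectrum ℂ (Fmat n d η) :=
      Set.image_congr fun μ _ => by rw [hdist0]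
    obtain ⟨μ₀, hμ₀⟩ := IsAlgClosed.exists_pow_nat_eq η (show 0 < d by omega)
    have hμ₀mem : μ₀ ∈ spectrum ℂ (Fmat n d η) := Fmat_root_mem hd1 hdn hμ₀
    have hnorm₀ : ‖μ₀‖ ^ d = ‖η‖ := by rw [← norm_pow, hμ₀]
    have hμ₀le1 : ‖μ₀‖ ≤ 1 := by
      have hle : ‖μ₀‖ ^ d ≤ 1 := by rw [hnorm₀]; exact hηlt.le
      exact (pow_le_one_iff_of_nonneg (norm_nonneg _) (by omega)).mp hle
    have hub : ∀ x ∈ (fun μ => ‖μ‖ ^ d) '' spectrum ℂ (Fmat n d η), x ≤ ‖η‖ := by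
      rintro x ⟨μ, hμ, rfl⟩
      show ‖μ‖ ^ d ≤ ‖η‖
      rcases Fmat_spec_sub hd1 hdn η μ hμ with h | h
      · rw [← norm_pow, h]
      · rw [h]
        exact pow_le_of_le_one (norm_nonneg _) hηlt.le (by omega)
    have hS1 : sSup ((fun μ => ‖μ‖ ^ d) '' spectrum ℂ (Fmat n d η)) = ‖η‖ := by
      have hne1 : ((fun μ => ‖μ‖ ^ d) '' spectrum ℂ (Fmat n d η)).Nonempty :=
        ⟨‖μ₀‖ ^ d, ⟨μ₀, hμ₀mem, rfl⟩⟩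
      apply le_antisymm (csSup_le hne1 hub)
      rw [← hnorm₀]
      exact le_csSup ⟨‖η‖, fun x hx => hub x hx⟩ ⟨μ₀, hμ₀mem, rfl⟩
    -- second term
    have hfun : (fun ν : ℂ => ‖((0:ℂ) - ν) / (1 - (starRingEnd ℂ ν) * 0)‖)
        = fun ν : ℂ => ‖ν‖ := by
      funext ν
      rw [mul_zero, sub_zero, div_one, zero_sub, norm_neg]
    have hdistA : distM 0 (spectrum ℂ (Fmat n d η))
        = sInf ((fun ν : ℂ => ‖ν‖) '' spectrum ℂ (Fmat n d η)) := by
      unfold distM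
      rw [hfun]
    set t : ℝ := sInf ((fun ν : ℂ => ‖ν‖) '' spectrum ℂ (Fmat n d η)) with ht
    have ht0 : 0 ≤ t :=
      Real.sInf_nonneg (by rintro x ⟨μ, _, rfl⟩; exact norm_nonneg _)
    have htle : t ≤ ‖μ₀‖ :=
      csInf_le ⟨0, by rintro x ⟨μ, _, rfl⟩; exact norm_nonneg _⟩ ⟨μ₀, hμ₀mem, rfl⟩
    set Dw := (minpoly ℂ (Fmat n d η)).natDegree with hDw
    have hDwd : d ≤ Dw := Fmat_minpoly_ge hd1 hdn η
    have hS2 : t ^ Dw ≤ ‖η‖ := by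
      calc t ^ Dw ≤ ‖μ₀‖ ^ Dw := pow_le_pow_left₀ ht0 htle Dw
        _ ≤ ‖μ₀‖ ^ d := pow_le_pow_of_le_one (norm_nonneg _) hμ₀le1 hDwd
        _ = ‖η‖ := hnorm₀
    have himg2 : (fun lam : ℂ => distM lam (spectrum ℂ (Fmat n d η)) ^ Dw) '' {0}
        = {t ^ Dw} := by
      rw [Set.image_singleton, hdistA]
    rw [himg1, hS1, himg2, csSup_singleton]
    rw [max_eq_left hS2]
    rw [show z - w = -(w - z) from by ring, neg_div, norm_neg]
end

section
/- (Sharpness of Theorem 2) Fix n ≥ 2 and let 𝔖_n = {A ∈ Ω_n : A has a single eigenvalue of multiplicity n}. For every d with 1 ≤ d ≤ n, define G^{(d)}(X) = diag(M_d(X), (tr(X)/n)·I_{n−d}), where M_d(X) is the d×d matrix with 1's on the subdiagonal, tr(X)/n in the (1,d) corner, and zeros elsewhere (and M_1(X) = [tr(X)/n]). Then G^{(d)} : Ω_n → Ω_n is holomorphic, the degree of the minimal polynomial of G^{(d)}(0) is d, and for every A ∈ 𝔖_n: r(G^{(d)}(A)) = (r(A)^{1/d} + r(G^{(d)}(0)))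 / (1 + r(G^{(d)}(0))·r(A)^{1/d}). -/
attribute [local instance] Matrix.normedAddCommGroup Matrix.normedSpace

/-- The spectral unit ball `Ω_n`. -/
def specBall (n : ℕ) : Set (Matrix (Fin n) (Fin n) ℂ) := {W | sRad W < 1}

open Matrix Polynomial

variable {n : ℕ}


lemma charpoly_eval' (M : Matrix (Fin n) (Fin n) ℂ) (μ : ℂ) :
    M.charpoly.eval μ = (μ • (1 : Matrix (Fin n) (Fin n) ℂ) - M).det := by
  rw [Matrix.charpoly, eval_det, matPolyEquiv_charmatrix]
  congr 1
  rw [Polynomial.eval_sub, Polynomial.eval_X, Polynomial.eval_C]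
  congr 1
  ext i j
  simp [Matrix.scalar_apply, Matrix.one_apply, Matrix.diagonal_apply]

lemma mem_spectrum_iff_det (M : Matrix (Fin n) (Fin n) ℂ) (μ : ℂ) :
    μ ∈ spectrum ℂ M ↔ (μ • (1 : Matrix (Fin n) (Fin n) ℂ) - M).det = 0 := by
  rw [spectrum.mem_iff, Algebra.algebraMap_eq_smul_one]
  rw [Matrix.isUnit_iff_isUnit_det, isUnit_iff_ne_zero, not_not]

lemma mem_spectrum_iff_root (M : Matrix (Fin n) (Fin n) ℂ) (μ : ℂ) :
    μ ∈ spectrum ℂ M ↔ M.charpoly.IsRoot μ := by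
  rw [mem_spectrum_iff_det, IsRoot, charpoly_eval']

lemma mem_spectrum_iff_eig (M : Matrix (Fin n) (Fin n) ℂ) (μ : ℂ) :
    μ ∈ spectrum ℂ M ↔ ∃ v ≠ 0, M.mulVec v = μ • v := by
  rw [mem_spectrum_iff_det, ← Matrix.exists_mulVec_eq_zero_iff]
  apply exists_congr; intro v
  apply and_congr_right; intro hv
  rw [Matrix.sub_mulVec, Matrix.smul_mulVec, Matrix.one_mulVec, sub_eq_zero, eq_comm]

lemma Fmat_apply (η : ℂ) (i j : Fin n) :
    Fmat n d η i j =
      if (i : ℕ) < d ∧ (j : ℕ) < d then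
        (if (i : ℕ) = (j : ℕ) + 1 then 1 else if (i : ℕ) = 0 ∧ (j : ℕ) = d - 1 then η else 0)
      else if (i : ℕ) = (j : ℕ) then η else 0 := by
  simp only [Fmat, Matrix.of_apply, Fin.ext_iff]

lemma Fmat_mulVec (hd1 : 1 ≤ d) (hdn : d ≤ n) (η : ℂ) (v : Fin n → ℂ) (i : Fin n) :
    (Fmat n d η).mulVec v i =
      if h : (i : ℕ) < d then
        (if (i : ℕ) = 0 then η * v ⟨d - 1, by omega⟩
         else v ⟨(i : ℕ) - 1, by omega⟩)
      else η * v i := by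
  rw [Matrix.mulVec, dotProduct]
  by_cases h : (i : ℕ) < d
  · rw [dif_pos h]
    by_cases h0 : (i : ℕ) = 0
    · rw [if_pos h0]
      have hdlt : d - 1 < n := by omega
      rw [Finset.sum_eq_single (⟨d - 1, hdlt⟩ : Fin n)]
      · have e1 : ((⟨d - 1, hdlt⟩ : Fin n) : ℕ) = d - 1 := rfl
        rw [Fmat_apply, e1, if_pos ⟨h, by omega⟩, if_neg (by omega), if_pos ⟨h0, rfl⟩]
      · intro j _ hj
        have hj' : (j : ℕ) ≠ d - 1 := fun hc => hj (Fin.ext (by simpa using hc))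
        rw [Fmat_apply]
        split_ifs <;> first | exact zero_mul _ | (exfalso; omega)
      · intro hc; exact absurd (Finset.mem_univ _) hc
    · rw [if_neg h0]
      have hilt : (i : ℕ) - 1 < n := by omega
      rw [Finset.sum_eq_single (⟨(i : ℕ) - 1, hilt⟩ : Fin n)]
      · have e1 : ((⟨(i : ℕ) - 1, hilt⟩ : Fin n) : ℕ) = (i : ℕ) - 1 := rfl
        rw [Fmat_apply, e1, if_pos ⟨h, by omega⟩, if_pos (by omega), one_mul]
      · intro j _ hj
        have hj' : (j : ℕ) ≠ (i : ℕ) - 1 := fun hc => hj (Fin.ext (by simpa using hc))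
        rw [Fmat_apply]
        split_ifs <;> first | exact zero_mul _ | (exfalso; omega)
      · intro hc; exact absurd (Finset.mem_univ _) hc
  · rw [dif_neg h]
    rw [Finset.sum_eq_single i]
    · rw [Fmat_apply, if_neg (by tauto), if_pos rfl]
    · intro j _ hj
      have hj' : (i : ℕ) ≠ (j : ℕ) := fun hc => hj (Fin.ext hc.symm)
      rw [Fmat_apply]
      split_ifs <;> first | exact zero_mul _ | (exfalso; omega)
    · intro hc; exact absurd (Finset.mem_univ _) hc
lemma spec_Fmat_subset {d : ℕ} (hd1 : 1 ≤ d) (hdn : d ≤ n) (η μ : ℂ)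
    (h : μ ∈ spectrum ℂ (Fmat n d η)) : μ ^ d = η ∨ μ = η := by
  rw [mem_spectrum_iff_eig] at h
  obtain ⟨v, hv0, hv⟩ := h
  have heq : ∀ i : Fin n, (Fmat n d η).mulVec v i = μ * v i := fun i => by
    have := congrFun hv i; simpa using this
  by_cases hbot : ∃ i : Fin n, d ≤ (i : ℕ) ∧ v i ≠ 0
  · right
    obtain ⟨i, hdi, hvi⟩ := hbot
    have h1 := heq i
    rw [Fmat_mulVec hd1 hdn, dif_neg (not_lt.2 hdi)] at h1
    have h2 : (η - μ) * v i = 0 := by linear_combination h1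
    rcases mul_eq_zero.1 h2 with h3 | h3
    · exact (sub_eq_zero.1 h3).symm
    · exact absurd h3 hvi
  · have hbz : ∀ i : Fin n, d ≤ (i : ℕ) → v i = 0 := by
      push_neg at hbot; exact hbot
    set w : ℕ → ℂ := fun k => if hk : k < n then v ⟨k, hk⟩ else 0 with hw
    have hvw' : ∀ i : Fin n, v i = w (i : ℕ) := by
      intro i; simp only [hw]; rw [dif_pos i.2]
    have hrow : ∀ k : ℕ, k < d → k ≠ 0 → w (k - 1) = μ * w k := by
      intro k hk hk0
      have hkn : k < n := lt_of_lt_of_le hk hdn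
      have h1 := heq ⟨k, hkn⟩
      rw [Fmat_mulVec hd1 hdn] at h1
      simp only [Fin.val_mk] at h1
      rw [dif_pos hk, if_neg hk0] at h1
      rw [hvw' ⟨k - 1, by omega⟩] at h1
      rw [hvw' ⟨k, hkn⟩] at h1
      simpa using h1
    have hrow0 : η * w (d - 1) = μ * w 0 := by
      have h0n : (0 : ℕ) < n := by omega
      have h1 := heq ⟨0, h0n⟩
      rw [Fmat_mulVec hd1 hdn] at h1
      simp only [Fin.val_mk] at h1
      rw [dif_pos (by omega : (0:ℕ) < d), if_pos trivial] at h1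
      rw [hvw' ⟨d - 1, by omega⟩, hvw' ⟨0, h0n⟩] at h1
      simpa using h1
    have key : ∀ k : ℕ, k ≤ d - 1 → w (d - 1 - k) = μ ^ k * w (d - 1) := by
      intro k
      induction k with
      | zero => intro _; simp
      | succ k ih =>
        intro hk
        have h1 : w (d - 1 - (k + 1)) = μ * w (d - 1 - k) := by
          have h2 := hrow (d - 1 - k) (by omega) (by omega)
          rw [show d - 1 - k - 1 = d - 1 - (k + 1) from by omega] at h2
          exact h2
        rw [h1, ih (by omega)]; ring
    by_cases hvd : w (d - 1) = 0
    · exfalso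
      apply hv0
      funext i
      show v i = 0
      by_cases hid : (i : ℕ) < d
      · rw [hvw' i]
        rw [show (i : ℕ) = d - 1 - (d - 1 - (i : ℕ)) from by omega]
        rw [key (d - 1 - (i : ℕ)) (by omega), hvd, mul_zero]
      · exact hbz i (not_lt.1 hid)
    · left
      have hkey := key (d - 1) (le_refl _)
      rw [show d - 1 - (d - 1) = 0 from by omega] at hkey
      have hpow : μ ^ d = μ * μ ^ (d - 1) := by
        conv_lhs => rw [show d = (d - 1) + 1 from by omega]
        rw [pow_succ']
      have hmul : η * w (d - 1) = μ ^ d * w (d - 1) := by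
        rw [hrow0, hkey, hpow]; ring
      have h2 : (μ ^ d - η) * w (d - 1) = 0 := by linear_combination -hmul
      rcases mul_eq_zero.1 h2 with h3 | h3
      · exact sub_eq_zero.1 h3
      · exact absurd h3 hvd

lemma root_mem_spec_Fmat {d : ℕ} (hd1 : 1 ≤ d) (hdn : d ≤ n) (hn : 1 ≤ n) (η μ : ℂ)
    (hμ : μ ^ d = η) : μ ∈ spectrum ℂ (Fmat n d η) := by
  rw [mem_spectrum_iff_eig]
  refine ⟨fun i => if h : (i : ℕ) < d then μ ^ (d - 1 - (i : ℕ)) else 0, ?_, ?_⟩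
  · intro hc
    have h1 := congrFun hc ⟨d - 1, by omega⟩
    simp only [Fin.val_mk, Pi.zero_apply] at h1
    rw [dif_pos (by omega : d - 1 < d)] at h1
    rw [show d - 1 - (d - 1) = 0 from by omega, pow_zero] at h1
    exact one_ne_zero h1
  · funext i
    rw [Fmat_mulVec hd1 hdn]
    by_cases h : (i : ℕ) < d
    · rw [dif_pos h]
      by_cases h0 : (i : ℕ) = 0
      · rw [if_pos h0]
        simp only [Fin.val_mk, Pi.smul_apply, smul_eq_mul]
        rw [dif_pos (by omega : d - 1 < d), dif_pos h]
        rw [show d - 1 - (d - 1) = 0 from by omega, pow_zero, mul_one, h0]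
        rw [show d - 1 - 0 = d - 1 from by omega]
        rw [← hμ, ← pow_succ']
        congr 1
        omega
      · rw [if_neg h0]
        simp only [Fin.val_mk, Pi.smul_apply, smul_eq_mul]
        rw [dif_pos (by omega : (i : ℕ) - 1 < d), dif_pos h]
        rw [← pow_succ']
        congr 1
        omega
    · rw [dif_neg h]
      simp only [Pi.smul_apply, smul_eq_mul]
      rw [dif_neg h, mul_zero, mul_zero]

lemma spectrum_finite' (M : Matrix (Fin n) (Fin n) ℂ) : (spectrum ℂ M).Finite := by
  apply Set.Finite.subset (Polynomial.finite_setOf_isRoot (p := M.charpoly)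
    M.charpoly_monic.ne_zero)
  intro μ hμ
  exact (mem_spectrum_iff_root M μ).1 hμ

lemma norm_le_sRad {M : Matrix (Fin n) (Fin n) ℂ} {μ : ℂ} (h : μ ∈ spectrum ℂ M) :
    ‖μ‖ ≤ sRad M :=
  le_csSup (((spectrum_finite' M).image _).bddAbove) ⟨μ, h, rfl⟩

lemma trace_div_le_sRad (hn : 1 ≤ n) (A : Matrix (Fin n) (Fin n) ℂ) :
    ‖A.trace / n‖ ≤ sRad A := by
  have hcard : A.charpoly.roots.card = n := by
    rw [Polynomial.splits_iff_card_roots.1 (IsAlgClosed.splits A.charpoly)]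
    simp [Matrix.charpoly_natDegree_eq_dim]
  have hroots : ∀ x ∈ A.charpoly.roots.map (fun z => ‖z‖), x ≤ sRad A := by
    intro x hx
    obtain ⟨z, hz, rfl⟩ := Multiset.mem_map.1 hx
    apply norm_le_sRad
    rw [mem_spectrum_iff_root]
    exact (Polynomial.mem_roots'.1 hz).2
  have h1 : ‖A.trace‖ ≤ n * sRad A := by
    rw [Matrix.trace_eq_sum_roots_charpoly]
    refine le_trans (norm_multiset_sum_le _) ?_
    have := Multiset.sum_le_card_nsmul (A.charpoly.roots.map (fun z => ‖z‖)) (sRad A) hroots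
    rwa [Multiset.card_map, hcard, nsmul_eq_mul] at this
  rw [norm_div]
  rw [div_le_iff₀ (by exact_mod_cast Nat.pos_of_ne_zero (by omega))]
  · calc ‖A.trace‖ ≤ n * sRad A := h1
      _ = sRad A * ‖(n : ℂ)‖ := by rw [Complex.norm_natCast]; ring

lemma sRad_Fmat {d : ℕ} (hd1 : 1 ≤ d) (hdn : d ≤ n) (hn : 1 ≤ n) {η : ℂ} (hη : ‖η‖ ≤ 1) :
    sRad (Fmat n d η) = ‖η‖ ^ ((1 : ℝ) / d) := by
  have hdR : (0 : ℝ) < d := by exact_mod_cast hd1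
  have hinv : (0 : ℝ) < 1 / d := by positivity
  obtain ⟨μ, hμ⟩ := IsAlgClosed.exists_pow_nat_eq η (n := d) (by omega)
  have hmem := root_mem_spec_Fmat hd1 hdn hn η μ hμ
  have hx : ∀ ν : ℂ, ν ^ d = η → ‖ν‖ = ‖η‖ ^ ((1 : ℝ) / d) := by
    intro ν hν
    rw [← hν, norm_pow, one_div]
    exact (Real.pow_rpow_inv_natCast (norm_nonneg ν) (by omega)).symm
  apply le_antisymm
  · refine csSup_le ⟨‖μ‖, ⟨μ, hmem, rfl⟩⟩ ?_
    rintro x ⟨ν, hν, rfl⟩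
    show ‖ν‖ ≤ ‖η‖ ^ ((1 : ℝ) / d)
    rcases spec_Fmat_subset hd1 hdn η ν hν with h | h
    · exact le_of_eq (hx ν h)
    · rw [h]
      rcases eq_or_lt_of_le (norm_nonneg η) with h0 | h0
    
      · rw [← h0, Real.zero_rpow hinv.ne']
      · calc ‖η‖ = ‖η‖ ^ (1 : ℝ) := (Real.rpow_one _).symm
          _ ≤ ‖η‖ ^ ((1 : ℝ) / d) := Real.rpow_le_rpow_of_exponent_ge h0 hη
              (by rw [div_le_one hdR]; exact_mod_cast hd1)
  · rw [← hx μ hμ]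
    exact norm_le_sRad hmem

lemma sRad_Fmat_zero {d : ℕ} (hd1 : 1 ≤ d) (hdn : d ≤ n) (hn : 1 ≤ n) :
    sRad (Fmat n d 0) = 0 := by
  have hdR : (0 : ℝ) < d := by exact_mod_cast hd1
  rw [sRad_Fmat hd1 hdn hn (by simp), norm_zero, Real.zero_rpow (by positivity)]

lemma Fmat_zero_pow {d : ℕ} (hd1 : 1 ≤ d) (hdn : d ≤ n) (k : ℕ) (hk : 1 ≤ k) (i j : Fin n) :
    ((Fmat n d 0) ^ k) i j = if (i : ℕ) = (j : ℕ) + k ∧ (i : ℕ) < d then 1 else 0 := by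
  induction k generalizing i j with
  | zero => omega
  | succ k ih =>
    rcases Nat.eq_or_lt_of_le hk with h1 | h1
    · have hk0 : k = 0 := by omega
      subst hk0
      rw [pow_one, Fmat_apply]
      split_ifs <;> first | rfl | (exfalso; omega)
    · have hk' : 1 ≤ k := by omega
      rw [pow_succ, Matrix.mul_apply]
      by_cases hj : (j : ℕ) + 1 < d
      · rw [Finset.sum_eq_single (⟨(j : ℕ) + 1, by omega⟩ : Fin n)]
        · rw [ih hk', Fmat_apply]
          simp only [Fin.val_mk]
          split_ifs <;> first | ring1 | (exfalso; omega)
        · intro b _ hb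
          have hb' : (b : ℕ) ≠ (j : ℕ) + 1 := fun hc => hb (Fin.ext hc)
          rw [ih hk', Fmat_apply]
          split_ifs <;> first | ring1 | (exfalso; omega)
        · intro hc; exact absurd (Finset.mem_univ _) hc
      · rw [Finset.sum_eq_zero, eq_comm, if_neg (by omega)]
        intro b _
        rw [ih hk', Fmat_apply]
        split_ifs <;> first | ring1 | (exfalso; omega)

lemma Fmat_zero_pow_d {d : ℕ} (hd1 : 1 ≤ d) (hdn : d ≤ n) : (Fmat n d 0) ^ d = 0 := by
  ext i j
  rw [Fmat_zero_pow hd1 hdn d hd1, if_neg (by omega)]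
  simp

lemma minpoly_Fmat_zero {d : ℕ} (hn : 2 ≤ n) (hd1 : 1 ≤ d) (hdn : d ≤ n) :
    (minpoly ℂ (Fmat n d 0)).natDegree = d := by
  have hint : IsIntegral ℂ (Fmat n d 0) := Algebra.IsIntegral.isIntegral _
  have hdvd : minpoly ℂ (Fmat n d 0) ∣ Polynomial.X ^ d :=
    minpoly.dvd ℂ _ (by rw [map_pow, Polynomial.aeval_X]; exact Fmat_zero_pow_d hd1 hdn)
  obtain ⟨i, hid, hass⟩ := (dvd_prime_pow Polynomial.prime_X d).1 hdvd
  have heq : minpoly ℂ (Fmat n d 0) = Polynomial.X ^ i :=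
    Polynomial.eq_of_monic_of_associated (minpoly.monic hint) (Polynomial.monic_X_pow i) hass
  have hpow : (Fmat n d 0) ^ i = 0 := by
    have h := minpoly.aeval ℂ (Fmat n d 0)
    rw [heq, map_pow, Polynomial.aeval_X] at h
    exact h
  have hge : d ≤ i := by
    by_contra hi
    push_neg at hi
    rcases Nat.eq_zero_or_pos i with hi0 | hi0
    · rw [hi0, pow_zero] at hpow
      have h2 := congrFun (congrFun hpow ⟨0, by omega⟩) ⟨0, by omega⟩
      simpa using h2
    · have h2 := congrFun (congrFun hpow ⟨i, by omega⟩) ⟨0, by omega⟩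
      rw [Fmat_zero_pow hd1 hdn i hi0] at h2
      simp only [Fin.val_mk] at h2
      rw [if_pos ⟨by omega, by omega⟩] at h2
      simpa using h2
  rw [heq, le_antisymm hid hge]
  exact Polynomial.natDegree_X_pow d

lemma Fmat_decomp {d : ℕ} (η : ℂ) :
    Fmat n d η = Fmat n d 0 + η • (Fmat n d 1 - Fmat n d 0) := by
  ext i j
  simp only [Fmat, Matrix.of_apply, Matrix.add_apply, Matrix.smul_apply, Matrix.sub_apply,
    smul_eq_mul]
  split_ifs <;> ring

lemma Fmat_differentiable (n d : ℕ) :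
    Differentiable ℂ (fun X : Matrix (Fin n) (Fin n) ℂ => Fmat n d (X.trace / n)) := by
  have hfun : (fun X : Matrix (Fin n) (Fin n) ℂ => Fmat n d (X.trace / n))
      = fun X : Matrix (Fin n) (Fin n) ℂ =>
          Fmat n d 0 + X.trace • (((n : ℂ))⁻¹ • (Fmat n d 1 - Fmat n d 0)) := by
    funext X
    rw [Fmat_decomp (X.trace / (n : ℂ)), smul_smul, div_eq_mul_inv]
  rw [hfun]
  have hTr : Differentiable ℂ (fun X : Matrix (Fin n) (Fin n) ℂ => X.trace) :=
    (LinearMap.toContinuousLinearMap (Matrix.traceLinearMap (Fin n) ℂ ℂ)).differentiable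
  exact (hTr.smul_const _).const_add _

lemma Fmat_mapsTo {d : ℕ} (hn : 2 ≤ n) (hd1 : 1 ≤ d) (hdn : d ≤ n) :
    Set.MapsTo (fun X : Matrix (Fin n) (Fin n) ℂ => Fmat n d (X.trace / n))
      (specBall n) (specBall n) := by
  intro X hX
  have hdR : (0 : ℝ) < d := by exact_mod_cast hd1
  have h2 : ‖X.trace / (n : ℂ)‖ < 1 :=
    lt_of_le_of_lt (trace_div_le_sRad (by omega) X) hX
  show sRad (Fmat n d (X.trace / n)) < 1
  rw [sRad_Fmat hd1 hdn (by omega) h2.le]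
  exact Real.rpow_lt_one (norm_nonneg _) h2 (by positivity)


/-- (Sharpness of Theorem 2) For `n ≥ 2` and `1 ≤ d ≤ n`, the map
`G⁽ᵈ⁾(X) = diag(M_d(X), (tr X / n)·I_{n-d})` is a holomorphic self-map of `Ω_n`, the
degree of the minimal polynomial of `G⁽ᵈ⁾(0)` is `d`, and equality holds in the spectral
Schwarz–Pick inequality at every `A ∈ Ω_n` having a single eigenvalue of
multiplicity `n`. -/
theorem stmt19 (n d : ℕ) (hn : 2 ≤ n) (hd1 : 1 ≤ d) (hdn : d ≤ n) :
    (DifferentiableOn ℂ (fun X : Matrix (Fin n) (Fin n) ℂ => Fmat n d (X.trace / n))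
      (specBall n)) ∧
    (Set.MapsTo (fun X : Matrix (Fin n) (Fin n) ℂ => Fmat n d (X.trace / n))
      (specBall n) (specBall n)) ∧
    (minpoly ℂ (Fmat n d ((0 : Matrix (Fin n) (Fin n) ℂ).trace / n))).natDegree = d ∧
    ∀ A ∈ specBall n, (∃ lam : ℂ, A.charpoly = (Polynomial.X - Polynomial.C lam) ^ n) →
      sRad (Fmat n d (A.trace / n)) =
        (sRad A ^ ((1 : ℝ) / d) + sRad (Fmat n d ((0 : Matrix (Fin n) (Fin n) ℂ).trace / n))) /
          (1 + sRad (Fmat n d ((0 : Matrix (Fin n) (Fin n) ℂ).trace / n)) *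
            sRad A ^ ((1 : ℝ) / d)) := by
  have hn1 : 1 ≤ n := by omega
  have h0tr : ((0 : Matrix (Fin n) (Fin n) ℂ).trace / (n : ℂ)) = 0 := by simp
  refine ⟨(Fmat_differentiable n d).differentiableOn, Fmat_mapsTo hn hd1 hdn, ?_, ?_⟩
  · rw [h0tr]
    exact minpoly_Fmat_zero hn hd1 hdn
  · rintro A hA ⟨lam, hchar⟩
    have hspec : spectrum ℂ A = {lam} := by
      ext μ
      rw [mem_spectrum_iff_root, hchar]
      simp only [Polynomial.IsRoot.def, Polynomial.eval_pow, Polynomial.eval_sub,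
        Polynomial.eval_X, Polynomial.eval_C, pow_eq_zero_iff (show n ≠ 0 by omega),
        sub_eq_zero, Set.mem_singleton_iff]
    have hsA : sRad A = ‖lam‖ := by
      show sSup _ = _
      rw [hspec, Set.image_singleton, csSup_singleton]
    have htr : A.trace / (n : ℂ) = lam := by
      rw [Matrix.trace_eq_sum_roots_charpoly, hchar, Polynomial.roots_pow,
        Polynomial.roots_X_sub_C]
      rw [Multiset.nsmul_singleton, Multiset.sum_replicate, nsmul_eq_mul]
      exact mul_div_cancel_left₀ _ (Nat.cast_ne_zero.mpr (show n ≠ 0 by omega))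
    have hlt : ‖lam‖ < 1 := hsA ▸ hA
    rw [htr, h0tr, sRad_Fmat hd1 hdn hn1 hlt.le, sRad_Fmat_zero hd1 hdn hn1, hsA]
    rw [add_zero, zero_mul, add_zero, div_one]
end
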